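/- Let d ≥ 2 be an integer and let Δ ∈ [-log d, log d]. Then there exist s, r ∈ [0,(d-1)/d] attaining the infimum defining M(Δ,d) (i.e. H₂(s) - H₂(r) + (s-r)·log(d-1) = Δ and D₂(s‖r) = M(Δ,d)), and the probability vectors σ = (1-s, s/(d-1), …, s/(d-1)) and ρ = (1-r, r/(d-1), …, r/(d-1)) on Fin d satisfy H(σ) - H(ρ) = Δ and D(σ‖ρ) = M(Δ,d). -/

import Mathlib

open scoped ENNReal BigOperators
open Filter Topology

noncomputable section

/-- Binary entropy (natural log), with Lean's convention `Real.log 0 = 0`. -/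
def binEntropy' (x : ℝ) : ℝ := -(x * Real.log x) - (1 - x) * Real.log (1 - x)

/-- Binary relative entropy, valued in `[0,∞]`. -/
def binRelEntropy (x y : ℝ) : ℝ≥0∞ :=
  if (y = 0 ∧ 0 < x) ∨ (y = 1 ∧ x < 1) then ⊤
  else ENNReal.ofReal (x * Real.log (x / y) + (1 - x) * Real.log ((1 - x) / (1 - y)))

/-- `M(Δ,d)`: infimum of binary relative entropies under the entropy-difference constraint. -/
def Mfun (Δ : ℝ) (d : ℕ) : ℝ≥0∞ :=
  sInf {m : ℝ≥0∞ | ∃ s r : ℝ, s ∈ Set.Icc (0:ℝ) (((d:ℝ) - 1) / d) ∧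
    r ∈ Set.Icc (0:ℝ) (((d:ℝ) - 1) / d) ∧
    binEntropy' s - binEntropy' r + (s - r) * Real.log ((d:ℝ) - 1) = Δ ∧
    m = binRelEntropy s r}

/-- Shannon entropy of a probability vector on `Fin d` (natural log). -/
def shEntropy {d : ℕ} (p : Fin d → ℝ) : ℝ := ∑ i, -(p i * Real.log (p i))

/-- Relative entropy between probability vectors on `Fin d`, valued in `[0,∞]`. -/
def relEntropy {d : ℕ} (p q : Fin d → ℝ) : ℝ≥0∞ :=
  if ∀ i, q i = 0 → p i = 0
  then ENNReal.ofReal (∑ i, p i * Real.log (p i / q i))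
  else ⊤

/-- `N(d) = sup_{0<r<1/2} r(1-r) (log(((1-r)/r)(d-1)))²`. -/
def Nfun (d : ℕ) : ℝ :=
  sSup {v : ℝ | ∃ r : ℝ, 0 < r ∧ r < 1/2 ∧
    v = r * (1 - r) * (Real.log ((1 - r) / r * ((d:ℝ) - 1)))^2}

/- ### Auxiliary lemmas -/

lemma lsc_min' {K : Set (ℝ × ℝ)} (hK : IsCompact K) (hne : K.Nonempty)
    {f : ℝ × ℝ → ℝ≥0∞} (hf : LowerSemicontinuousOn f K) :
    ∃ p ∈ K, ∀ q ∈ K, f p ≤ f q := by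
  set m : ℝ≥0∞ := ⨅ q ∈ K, f q with hm
  rcases eq_or_ne m ⊤ with htop | hfin
  · obtain ⟨p, hp⟩ := hne
    refine ⟨p, hp, fun q hq => ?_⟩
    have : m ≤ f q := biInf_le f hq
    rw [htop] at this
    simp [top_le_iff.mp this]
  · have hsel : ∀ n : ℕ, ∃ q ∈ K, f q < m + ((n + 1 : ℕ) : ℝ≥0∞)⁻¹ := by
      intro n
      have hlt : m < m + ((n + 1 : ℕ) : ℝ≥0∞)⁻¹ := by
        refine ENNReal.lt_add_right hfin ?_
        simp
      have hlt' : sInf (f '' K) < m + ((n + 1 : ℕ) : ℝ≥0∞)⁻¹ := by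
        rw [sInf_image]; exact hlt
      obtain ⟨b, ⟨q, hq, rfl⟩, hb⟩ := exists_lt_of_csInf_lt (hne.image f) hlt'
      exact ⟨q, hq, hb⟩
    choose u hu hfu using hsel
    obtain ⟨p, hpK, φ, hφ, hφt⟩ := hK.tendsto_subseq hu
    refine ⟨p, hpK, fun q hq => ?_⟩
    have hmle : m ≤ f q := biInf_le f hq
    suffices h : f p ≤ m from h.trans hmle
    by_contra hgt
    push_neg at hgt
    obtain ⟨c, hc1, hc2⟩ := exists_between hgt
    have hev1 : ∀ᶠ y in 𝓝[K] p, c < f y := hf p hpK c hc2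
    have htod : Tendsto (u ∘ φ) atTop (𝓝[K] p) := by
      rw [tendsto_nhdsWithin_iff]
      exact ⟨hφt, Eventually.of_forall fun n => hu _⟩
    have hev2 : ∀ᶠ n in atTop, c < f (u (φ n)) := htod.eventually hev1
    have hten : Tendsto (fun n : ℕ => m + ((n + 1 : ℕ) : ℝ≥0∞)⁻¹) atTop (𝓝 m) := by
      have h0 : Tendsto (fun n : ℕ => ((n + 1 : ℕ) : ℝ≥0∞)⁻¹) atTop (𝓝 0) :=
        ENNReal.tendsto_inv_nat_nhds_zero.comp (tendsto_add_atTop_nat 1)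
      simpa using (tendsto_const_nhds.add h0)
    have hev3 : ∀ᶠ n in atTop, m + ((n + 1 : ℕ) : ℝ≥0∞)⁻¹ < c :=
      hten.eventually_lt_const hc1
    have hev4 : ∀ᶠ n in atTop, f (u (φ n)) < c := by
      filter_upwards [hev3] with n hn
      refine lt_of_lt_of_le (hfu (φ n)) (le_trans ?_ hn.le)
      gcongr
      exact hφ.le_apply
    obtain ⟨n, h1, h2⟩ := (hev2.and hev4).exists
    exact absurd h1 (not_lt.mpr h2.le)

lemma mul_log_div' (x y : ℝ) (hy : y ≠ 0) :
    x * Real.log (x / y) = x * Real.log x - x * Real.log y := by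
  rcases eq_or_ne x 0 with rfl | hx
  · simp
  · rw [Real.log_div hx hy]; ring

lemma mul_log_ge' {x : ℝ} (hx : 0 < x) : x - 1 ≤ x * Real.log x := by
  have h := Real.log_le_sub_one_of_pos (show (0:ℝ) < x⁻¹ by positivity)
  rw [Real.log_inv] at h
  have := mul_le_mul_of_nonneg_left h hx.le
  rw [mul_sub, mul_inv_cancel₀ hx.ne'] at this
  nlinarith

lemma lsc_bre {a : ℝ} (ha : a < 1) :
    LowerSemicontinuousOn (fun p : ℝ × ℝ => binRelEntropy p.1 p.2)
      (Set.Icc 0 a ×ˢ Set.Icc 0 a) := by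
  set Q : Set (ℝ × ℝ) := Set.Icc 0 a ×ˢ Set.Icc 0 a with hQ
  intro p hp
  obtain ⟨⟨hx0, hxa⟩, hy0, hya⟩ := hp
  rcases hy0.eq_or_lt with hy | hy
  · rcases hx0.eq_or_lt with hx | hx
    · intro c hc
      change c < binRelEntropy p.1 p.2 at hc
      rw [← hx, ← hy] at hc
      have h0 : binRelEntropy 0 0 = 0 := by
        norm_num [binRelEntropy]
      rw [h0] at hc
      exact absurd hc (by simp)
    · intro c hc
      change c < binRelEntropy p.1 p.2 at hc
      have hPtop : binRelEntropy p.1 p.2 = ⊤ := by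
        rw [binRelEntropy, if_pos (Or.inl ⟨hy.symm, hx⟩)]
      have hcT : c ≠ ⊤ := by rw [hPtop] at hc; exact hc.ne
      set c' := c.toReal with hc'
      have hc'0 : 0 ≤ c' := ENNReal.toReal_nonneg
      have hp1 : 0 < p.1 := hx
      set δ := Real.exp (-(c' + 2) * (2 / p.1) - 1) with hδ
      have hδ0 : 0 < δ := Real.exp_pos _
      have hexp : -(c' + 2) * (2 / p.1) - 1 < 0 := by
        have : 0 ≤ (c' + 2) * (2 / p.1) := by positivity
        linarith
      have hδ1 : δ < 1 := by
        rw [hδ]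
        exact lt_of_lt_of_eq (Real.exp_lt_exp.mpr hexp) Real.exp_zero
      have hopen : IsOpen {q : ℝ × ℝ | p.1 / 2 < q.1 ∧ q.2 < δ} :=
        (isOpen_lt continuous_const continuous_fst).inter
          (isOpen_lt continuous_snd continuous_const)
      have hmem : p ∈ {q : ℝ × ℝ | p.1 / 2 < q.1 ∧ q.2 < δ} :=
        ⟨by linarith, lt_of_le_of_lt hy.ge hδ0⟩
      filter_upwards [mem_nhdsWithin_of_mem_nhds (hopen.mem_nhds hmem),
        self_mem_nhdsWithin] with q hq hqQ
      obtain ⟨hq1, hq2⟩ := hq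
      obtain ⟨⟨hq10, hq1a⟩, hq20, hq2a⟩ := hqQ
      have hq1pos : 0 < q.1 := lt_of_le_of_lt (by linarith) hq1
      show c < binRelEntropy q.1 q.2
      rcases hq20.eq_or_lt with h2 | h2
      · rw [binRelEntropy, if_pos (Or.inl ⟨h2.symm, hq1pos⟩)]
        exact hcT.lt_top
      · have hq21 : q.2 < 1 := lt_trans hq2 hδ1
        have hq1lt1 : q.1 < 1 := lt_of_le_of_lt hq1a ha
        rw [binRelEntropy, if_neg (by
          push_neg
          exact ⟨fun h => absurd h h2.ne', fun h => absurd h hq21.ne⟩)]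
        rw [ENNReal.lt_ofReal_iff_toReal_lt hcT]
        rw [mul_log_div' _ _ h2.ne', mul_log_div' _ _ (by linarith : (1:ℝ) - q.2 ≠ 0)]
        have h1 : q.1 - 1 ≤ q.1 * Real.log q.1 := mul_log_ge' hq1pos
        have h2' : -q.1 ≤ (1 - q.1) * Real.log (1 - q.1) := by
          have := mul_log_ge' (show (0:ℝ) < 1 - q.1 by linarith)
          linarith
        have h3 : (1 - q.1) * Real.log (1 - q.2) ≤ 0 :=
          mul_nonpos_of_nonneg_of_nonpos (by linarith)
            (Real.log_nonpos (by linarith) (by linarith))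
        have h4 : c' + 2 < -(q.1 * Real.log q.2) := by
          have hlog : Real.log q.2 < -(c' + 2) * (2 / p.1) - 1 := by
            calc Real.log q.2 < Real.log δ := Real.log_lt_log h2 hq2
            _ = -(c' + 2) * (2 / p.1) - 1 := by rw [hδ, Real.log_exp]
          have hl : (c' + 2) * (2 / p.1) + 1 < -Real.log q.2 := by linarith
          have hkey : (p.1 / 2) * ((c' + 2) * (2 / p.1) + 1) < q.1 * (-Real.log q.2) :=
            mul_lt_mul'' hq1 hl (by positivity) (by positivity)
          have hid : (p.1 / 2) * ((c' + 2) * (2 / p.1) + 1) = (c' + 2) + p.1 / 2 := by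
            field_simp
          nlinarith
        nlinarith
  · have hy1 : p.2 < 1 := lt_of_le_of_lt hya ha
    have hcont : ContinuousWithinAt
        (fun q : ℝ × ℝ => ENNReal.ofReal (q.1 * Real.log q.1 - q.1 * Real.log q.2 +
          ((1 - q.1) * Real.log (1 - q.1) - (1 - q.1) * Real.log (1 - q.2)))) Q p := by
      apply ContinuousAt.continuousWithinAt
      apply ENNReal.continuous_ofReal.continuousAt.comp
      have c1 : ContinuousAt (fun q : ℝ × ℝ => q.1 * Real.log q.1) p := by
        have he : (fun q : ℝ × ℝ => q.1 * Real.log q.1)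
            = (fun x => -Real.negMulLog x) ∘ Prod.fst := by
          ext q; simp [Real.negMulLog]
        rw [he]
        exact ((Real.continuous_negMulLog.neg).comp continuous_fst).continuousAt
      have c2 : ContinuousAt (fun q : ℝ × ℝ => q.1 * Real.log q.2) p :=
        continuous_fst.continuousAt.mul
          ((Real.continuousAt_log hy.ne').comp continuous_snd.continuousAt)
      have c3 : ContinuousAt (fun q : ℝ × ℝ => (1 - q.1) * Real.log (1 - q.1)) p := by
        have he : (fun q : ℝ × ℝ => (1 - q.1) * Real.log (1 - q.1))
            = (fun x => -Real.negMulLog x) ∘ (fun q : ℝ × ℝ => 1 - q.1) := by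
          ext q; simp [Real.negMulLog]
        rw [he]
        exact ((Real.continuous_negMulLog.neg).comp
          (continuous_const.sub continuous_fst)).continuousAt
      have c4' : ContinuousAt (Real.log ∘ (fun q : ℝ × ℝ => 1 - q.2)) p :=
        ContinuousAt.comp (Real.continuousAt_log (by linarith : (1:ℝ) - p.2 ≠ 0))
          (continuous_const.sub continuous_snd).continuousAt
      have c4 : ContinuousAt (fun q : ℝ × ℝ => (1 - q.1) * Real.log (1 - q.2)) p :=
        (continuous_const.sub continuous_fst).continuousAt.mul c4'
      exact (c1.sub c2).add (c3.sub c4)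
    have heq : ∀ᶠ q in 𝓝[Q] p, (fun p : ℝ × ℝ => binRelEntropy p.1 p.2) q =
        (fun q : ℝ × ℝ => ENNReal.ofReal (q.1 * Real.log q.1 - q.1 * Real.log q.2 +
          ((1 - q.1) * Real.log (1 - q.1) - (1 - q.1) * Real.log (1 - q.2)))) q := by
      have hopen : IsOpen {q : ℝ × ℝ | 0 < q.2 ∧ q.2 < 1} :=
        (isOpen_lt continuous_const continuous_snd).inter
          (isOpen_lt continuous_snd continuous_const)
      filter_upwards [mem_nhdsWithin_of_mem_nhds (hopen.mem_nhds ⟨hy, hy1⟩)] with q hq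
      obtain ⟨hq0, hq1⟩ := hq
      show binRelEntropy q.1 q.2 = _
      rw [binRelEntropy, if_neg (by
        push_neg
        exact ⟨fun h => absurd h hq0.ne', fun h => absurd h hq1.ne⟩)]
      rw [mul_log_div' _ _ hq0.ne', mul_log_div' _ _ (by linarith : (1:ℝ) - q.2 ≠ 0)]
    have hfp : (fun p : ℝ × ℝ => binRelEntropy p.1 p.2) p =
        ENNReal.ofReal (p.1 * Real.log p.1 - p.1 * Real.log p.2 +
          ((1 - p.1) * Real.log (1 - p.1) - (1 - p.1) * Real.log (1 - p.2))) := by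
      show binRelEntropy p.1 p.2 = _
      rw [binRelEntropy, if_neg (by
        push_neg
        exact ⟨fun h => absurd h hy.ne', fun h => absurd h hy1.ne⟩)]
      rw [mul_log_div' _ _ hy.ne', mul_log_div' _ _ (by linarith : (1:ℝ) - p.2 ≠ 0)]
    exact (hcont.congr_of_eventuallyEq heq hfp).lowerSemicontinuousWithinAt

lemma continuous_binEntropy' : Continuous binEntropy' := by
  have he : binEntropy' = fun x => Real.negMulLog x + Real.negMulLog (1 - x) := by
    ext x; simp [binEntropy', Real.negMulLog]; ring
  rw [he]
  exact Real.continuous_negMulLog.add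
    (Real.continuous_negMulLog.comp (continuous_const.sub continuous_id))

@[simp] lemma binEntropy'_zero : binEntropy' 0 = 0 := by simp [binEntropy']

lemma sh_eq (d : ℕ) (hd : 2 ≤ d) (s : ℝ) :
    shEntropy (fun i : Fin d => if (i : ℕ) = 0 then 1 - s else s / ((d:ℝ) - 1))
      = binEntropy' s + s * Real.log ((d:ℝ) - 1) := by
  obtain ⟨m, rfl⟩ : ∃ m, d = m + 1 := ⟨d - 1, by omega⟩
  have hm1 : 1 ≤ m := by omega
  have hcast : ((m + 1 : ℕ) : ℝ) - 1 = (m : ℝ) := by push_cast; ring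
  have hm0 : (m : ℝ) ≠ 0 := by positivity
  have hterm : (m : ℕ) • -(s / (m : ℝ) * Real.log (s / (m : ℝ)))
      = -(s * Real.log s) + s * Real.log (m : ℝ) := by
    rcases eq_or_ne s 0 with rfl | hs
    · simp
    · rw [nsmul_eq_mul, Real.log_div hs hm0]
      field_simp
      ring
  rw [shEntropy, Fin.sum_univ_succ]
  have hsucc : ∀ i : Fin m,
      -((if ((i.succ : Fin (m+1)) : ℕ) = 0 then 1 - s else s / (((m+1:ℕ):ℝ) - 1)) *
        Real.log (if ((i.succ : Fin (m+1)) : ℕ) = 0 then 1 - s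
          else s / (((m+1:ℕ):ℝ) - 1)))
      = -(s / (m : ℝ) * Real.log (s / (m : ℝ))) := by
    intro i
    rw [if_neg (by simp), hcast]
  rw [Finset.sum_congr rfl (fun i _ => hsucc i), Finset.sum_const, Finset.card_univ,
    Fintype.card_fin, hterm, if_pos (show (((0 : Fin (m+1)) : ℕ) = 0) from rfl), binEntropy', hcast]
  ring

lemma rel_eq (d : ℕ) (hd : 2 ≤ d) (s r : ℝ) (hs0 : 0 ≤ s) (hs1 : s < 1)
    (hr0 : 0 ≤ r) (hr1 : r < 1) :
    relEntropy (fun i : Fin d => if (i : ℕ) = 0 then 1 - s else s / ((d:ℝ) - 1))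
      (fun i : Fin d => if (i : ℕ) = 0 then 1 - r else r / ((d:ℝ) - 1))
      = binRelEntropy s r := by
  obtain ⟨m, rfl⟩ : ∃ m, d = m + 1 := ⟨d - 1, by omega⟩
  have hm1 : 1 ≤ m := by omega
  have hcast : ((m + 1 : ℕ) : ℝ) - 1 = (m : ℝ) := by push_cast; ring
  have hm0 : (m : ℝ) ≠ 0 := by positivity
  rcases hr0.eq_or_lt with hr | hr
  · -- r = 0
    rcases hs0.eq_or_lt with hs | hs
    · -- s = 0 : both are 0
      rw [← hs, ← hr]
      have hsum : (∑ i : Fin (m+1),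
          (if (i : ℕ) = 0 then 1 - (0:ℝ) else 0 / (((m+1:ℕ):ℝ) - 1)) *
            Real.log ((if (i : ℕ) = 0 then 1 - (0:ℝ) else 0 / (((m+1:ℕ):ℝ) - 1)) /
              (if (i : ℕ) = 0 then 1 - (0:ℝ) else 0 / (((m+1:ℕ):ℝ) - 1)))) = 0 := by
        apply Finset.sum_eq_zero
        intro i _
        split_ifs <;> simp
      rw [relEntropy, if_pos (fun i h => h), hsum]
      norm_num [binRelEntropy]
    · -- 0 < s : both ⊤
      have h1 : relEntropy
          (fun i : Fin (m+1) => if (i : ℕ) = 0 then 1 - s else s / (((m+1:ℕ):ℝ) - 1))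
          (fun i : Fin (m+1) => if (i : ℕ) = 0 then 1 - r else r / (((m+1:ℕ):ℝ) - 1)) = ⊤ := by
        rw [relEntropy, if_neg]
        push_neg
        refine ⟨⟨1, by omega⟩, ?_, ?_⟩
        · have h : ((⟨1, by omega⟩ : Fin (m+1)) : ℕ) ≠ 0 := by simp
          rw [if_neg h, ← hr]
          simp
        · have h : ((⟨1, by omega⟩ : Fin (m+1)) : ℕ) ≠ 0 := by simp
          rw [if_neg h, hcast]
          positivity
      rw [h1, binRelEntropy, if_pos (Or.inl ⟨hr.symm, hs⟩)]
  · -- 0 < r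
    have hden : ∀ i : Fin (m+1),
        (if (i : ℕ) = 0 then 1 - r else r / (((m+1:ℕ):ℝ) - 1)) ≠ 0 := by
      intro i
      rcases eq_or_ne (i : ℕ) 0 with h | h
      · rw [if_pos h]; intro hc; linarith [hc]
      · rw [if_neg h, hcast]; positivity
    rw [relEntropy, if_pos (fun i h => absurd h (hden i))]
    rw [binRelEntropy, if_neg (by
      push_neg
      exact ⟨fun h => absurd h hr.ne', fun h => absurd h hr1.ne⟩)]
    congr 1
    have hdivdiv : s / (m : ℝ) / (r / (m : ℝ)) = s / r := by
      field_simp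
    have hterm : (m : ℕ) • (s / (m : ℝ) * Real.log (s / r)) = s * Real.log (s / r) := by
      rw [nsmul_eq_mul]
      field_simp
    rw [Fin.sum_univ_succ]
    have hsucc : ∀ i : Fin m,
        (if ((i.succ : Fin (m+1)) : ℕ) = 0 then 1 - s else s / (((m+1:ℕ):ℝ) - 1)) *
          Real.log ((if ((i.succ : Fin (m+1)) : ℕ) = 0 then 1 - s
              else s / (((m+1:ℕ):ℝ) - 1)) /
            (if ((i.succ : Fin (m+1)) : ℕ) = 0 then 1 - r else r / (((m+1:ℕ):ℝ) - 1)))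
        = s / (m : ℝ) * Real.log (s / r) := by
      intro i
      rw [if_neg (by simp), if_neg (by simp), hcast, hdivdiv]
    rw [Finset.sum_congr rfl (fun i _ => hsucc i), Finset.sum_const, Finset.card_univ,
      Fintype.card_fin, hterm,
      if_pos (show (((0 : Fin (m+1)) : ℕ) = 0) from rfl),
      if_pos (show (((0 : Fin (m+1)) : ℕ) = 0) from rfl)]
    ring

lemma g_max (d : ℕ) (hd : 2 ≤ d) :
    binEntropy' (((d:ℝ) - 1) / d) + (((d:ℝ) - 1) / d) * Real.log ((d:ℝ) - 1)
      = Real.log d := by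
  have hd2 : (2:ℝ) ≤ (d:ℝ) := by exact_mod_cast hd
  have hd0 : (0:ℝ) < d := by linarith
  have hdm0 : (d:ℝ) - 1 ≠ 0 := by linarith
  have hdne : (d:ℝ) ≠ 0 := by linarith
  have h1a : 1 - ((d:ℝ) - 1) / d = 1 / d := by field_simp; ring
  rw [binEntropy', h1a, Real.log_div hdm0 hdne, Real.log_div one_ne_zero hdne, Real.log_one]
  field_simp
  ring

/- ### Main theorem -/

theorem Mfun_attained (d : ℕ) (hd : 2 ≤ d) (Δ : ℝ)
    (hΔ : Δ ∈ Set.Icc (-Real.log d) (Real.log d)) :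
    ∃ s r : ℝ, s ∈ Set.Icc (0:ℝ) (((d:ℝ) - 1) / d) ∧ r ∈ Set.Icc (0:ℝ) (((d:ℝ) - 1) / d) ∧
      binEntropy' s - binEntropy' r + (s - r) * Real.log ((d:ℝ) - 1) = Δ ∧
      binRelEntropy s r = Mfun Δ d ∧
      shEntropy (fun i : Fin d => if (i : ℕ) = 0 then 1 - s else s / ((d:ℝ) - 1)) -
        shEntropy (fun i : Fin d => if (i : ℕ) = 0 then 1 - r else r / ((d:ℝ) - 1)) = Δ ∧
      relEntropy (fun i : Fin d => if (i : ℕ) = 0 then 1 - s else s / ((d:ℝ) - 1))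
        (fun i : Fin d => if (i : ℕ) = 0 then 1 - r else r / ((d:ℝ) - 1)) = Mfun Δ d := by
  have hd2 : (2:ℝ) ≤ (d:ℝ) := by exact_mod_cast hd
  have hd0 : (0:ℝ) < d := by linarith
  have ha0 : 0 ≤ ((d:ℝ) - 1) / d := by apply div_nonneg <;> linarith
  have ha1 : ((d:ℝ) - 1) / d < 1 := by rw [div_lt_one hd0]; linarith
  set g : ℝ → ℝ := fun t => binEntropy' t + t * Real.log ((d:ℝ) - 1) with hg
  have hgc : Continuous g := continuous_binEntropy'.add (continuous_id.mul continuous_const)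
  have hg0 : g 0 = 0 := by simp [hg]
  have hga : g (((d:ℝ) - 1) / d) = Real.log d := g_max d hd
  set K : Set (ℝ × ℝ) := (Set.Icc 0 (((d:ℝ) - 1) / d) ×ˢ Set.Icc 0 (((d:ℝ) - 1) / d)) ∩
    {p : ℝ × ℝ | g p.1 - g p.2 = Δ} with hK
  have hKc : IsCompact K := (isCompact_Icc.prod isCompact_Icc).inter_right
    (isClosed_eq ((hgc.comp continuous_fst).sub (hgc.comp continuous_snd)) continuous_const)
  have hKne : K.Nonempty := by
    rcases le_or_gt 0 Δ with h | h
    · have hmem : Δ ∈ Set.Icc (g 0) (g (((d:ℝ) - 1) / d)) := by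
        rw [hg0, hga]; exact ⟨h, hΔ.2⟩
      obtain ⟨s, hs, hgs⟩ := intermediate_value_Icc ha0 hgc.continuousOn hmem
      exact ⟨(s, 0), ⟨hs, Set.left_mem_Icc.mpr ha0⟩, by simp [hgs, hg0]⟩
    · have hmem : -Δ ∈ Set.Icc (g 0) (g (((d:ℝ) - 1) / d)) := by
        rw [hg0, hga]; exact ⟨by linarith, by linarith [hΔ.1]⟩
      obtain ⟨r, hr, hgr⟩ := intermediate_value_Icc ha0 hgc.continuousOn hmem
      refine ⟨(0, r), ⟨Set.left_mem_Icc.mpr ha0, hr⟩, ?_⟩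
      show g 0 - g r = Δ
      rw [hg0, hgr]; ring
  have hlsc : LowerSemicontinuousOn (fun p : ℝ × ℝ => binRelEntropy p.1 p.2) K :=
    (lsc_bre ha1).mono Set.inter_subset_left
  obtain ⟨p, hpK, hmin⟩ := lsc_min' hKc hKne hlsc
  obtain ⟨⟨hp1, hp2⟩, hpcon⟩ := hpK
  have hconv : ∀ s r : ℝ, g s - g r
      = binEntropy' s - binEntropy' r + (s - r) * Real.log ((d:ℝ) - 1) := by
    intro s r; simp only [hg]; ring
  have hpcon' : binEntropy' p.1 - binEntropy' p.2 + (p.1 - p.2) * Real.log ((d:ℝ) - 1) = Δ := by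
    rw [← hconv]; exact hpcon
  have hM : binRelEntropy p.1 p.2 = Mfun Δ d := by
    apply le_antisymm
    · apply le_sInf
      rintro mval ⟨s, r, hs, hr, hcon, rfl⟩
      refine hmin (s, r) ⟨⟨hs, hr⟩, ?_⟩
      show g s - g r = Δ
      rw [hconv]; exact hcon
    · exact sInf_le ⟨p.1, p.2, hp1, hp2, hpcon', rfl⟩
  refine ⟨p.1, p.2, hp1, hp2, hpcon', hM, ?_, ?_⟩
  · rw [sh_eq d hd p.1, sh_eq d hd p.2]
    linarith [hpcon']
  · rw [rel_eq d hd p.1 p.2 hp1.1 (lt_of_le_of_lt hp1.2 ha1) hp2.1 (lt_of_le_of_lt hp2.2 ha1)]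
    exact hM

end
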